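/- Let F ∈ C⁰(T⁵) and let φ ∈ C²(T⁵) solve equation (★). Let x₀ ∈ K = [−1/2,1/2]⁵ be a point where φ attains its minimum over K, set ε₀ = 1/48 and u(x) = φ(x) − max_K φ + 4ε₀|x−x₀|². Let Γ_{ε₀} = { x ∈ B_{1/2}(x₀) : u(y) ≥ u(x) + ∇u(x)·(y−x) for all y ∈ B_{1/2}(x₀), and |∇u(x)| < ε₀/2 }. Then for every x ∈ Γ_{ε₀} one has (1/5)Δu(x) ≤ e^{max_K F} and det(D²u(x)) ≤ e^{5 max_K F}. -/

import Mathlib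

open MeasureTheory

/-- Partial derivative in the `i`-th coordinate direction. -/
noncomputable def pd {n : ℕ} (i : Fin n) (f : (Fin n → ℝ) → ℝ) : (Fin n → ℝ) → ℝ :=
  fun x => fderiv ℝ f x (Pi.single i 1)

/-- Second partial derivative `∂²f/∂x^i∂x^j`. -/
noncomputable def pd2 {n : ℕ} (i j : Fin n) (f : (Fin n → ℝ) → ℝ) : (Fin n → ℝ) → ℝ :=
  pd i (pd j f)

/-- A function on `ℝⁿ` that is `1`-periodic in every coordinate, i.e. a function on `Tⁿ`. -/
def PeriodicPi {n : ℕ} (f : (Fin n → ℝ) → ℝ) : Prop :=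
  ∀ x : Fin n → ℝ, ∀ i : Fin n, f (x + Pi.single i 1) = f x

/-- The Euclidean Laplacian. -/
noncomputable def lap {n : ℕ} (f : (Fin n → ℝ) → ℝ) : (Fin n → ℝ) → ℝ :=
  fun x => ∑ i, pd2 i i f x

/-- Equation (★): the reduction of the quaternionic Monge–Ampère equation to `T⁵`. -/
def EqStar (F φ : (Fin 5 → ℝ) → ℝ) : Prop :=
  ∀ x : Fin 5 → ℝ,
    (pd2 0 0 φ x + pd2 1 1 φ x + pd2 2 2 φ x + pd2 3 3 φ x + 1) * (pd2 4 4 φ x + 1)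
      - (pd2 0 4 φ x) ^ 2 - (pd2 1 4 φ x) ^ 2 - (pd2 2 4 φ x) ^ 2 - (pd2 3 4 φ x) ^ 2
      = Real.exp (F x)

/-- The Euclidean norm of a vector in `ℝⁿ`. -/
noncomputable def eucNorm {n : ℕ} (v : Fin n → ℝ) : ℝ :=
  Real.sqrt (∑ i, (v i) ^ 2)

/-- The fundamental cube `K = [−1/2, 1/2]⁵`. -/
def Kcube : Set (Fin 5 → ℝ) :=
  Set.Icc (fun _ => -(1/2)) (fun _ => 1/2)

/-- The function `u(x) = φ(x) − max_K φ + 4ε₀|x − x₀|²` with `ε₀ = 1/48`. -/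
noncomputable def uAux (φ : (Fin 5 → ℝ) → ℝ) (x₀ : Fin 5 → ℝ) : (Fin 5 → ℝ) → ℝ :=
  fun x => φ x - sSup (φ '' Kcube) + 4 * (1/48) * ∑ i, (x i - x₀ i) ^ 2

/-- The set `Γ_{ε₀}` of points of the ball `B_{1/2}(x₀)` where `u` admits a supporting
hyperplane (on that ball) and the gradient of `u` is smaller than `ε₀/2`, with `ε₀ = 1/48`. -/
noncomputable def GammaSet (φ : (Fin 5 → ℝ) → ℝ) (x₀ : Fin 5 → ℝ) : Set (Fin 5 → ℝ) :=
  {x | eucNorm (x - x₀) < 1/2 ∧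
    (∀ y : Fin 5 → ℝ, eucNorm (y - x₀) < 1/2 →
      uAux φ x₀ x + ∑ i, pd i (uAux φ x₀) x * (y i - x i) ≤ uAux φ x₀ y) ∧
    eucNorm (fun i => pd i (uAux φ x₀) x) < (1/48) / 2}

/-! ### Auxiliary lemmas -/

lemma clm_apply_sum (n : ℕ) (L : (Fin n → ℝ) →L[ℝ] ℝ) (v : Fin n → ℝ) :
    L v = ∑ i, v i * L (Pi.single i 1) := by
  conv_lhs => rw [← Finset.univ_sum_single v]
  rw [map_sum]
  refine Finset.sum_congr rfl fun i _ => ?_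
  have : Pi.single i (v i) = v i • (Pi.single i (1:ℝ) : Fin n → ℝ) := by
    rw [← Pi.single_smul, smul_eq_mul, mul_one]
  rw [this, _root_.map_smul, smul_eq_mul]

lemma clm_apply_sum' {n : ℕ} {G : Type*} [NormedAddCommGroup G] [NormedSpace ℝ G]
    (L : (Fin n → ℝ) →L[ℝ] G) (v : Fin n → ℝ) :
    L v = ∑ i, v i • L (Pi.single i 1) := by
  conv_lhs => rw [← Finset.univ_sum_single v]
  rw [map_sum]
  refine Finset.sum_congr rfl fun i _ => ?_
  have : Pi.single i (v i) = v i • (Pi.single i (1:ℝ) : Fin n → ℝ) := by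
    rw [← Pi.single_smul, smul_eq_mul, mul_one]
  rw [this, _root_.map_smul]

lemma eucNorm_eq (n : ℕ) (v : Fin n → ℝ) :
    eucNorm v = ‖(WithLp.equiv 2 (Fin n → ℝ)).symm v‖ := by
  rw [EuclideanSpace.norm_eq, eucNorm]
  congr 1
  refine Finset.sum_congr rfl fun i _ => ?_
  rw [Real.norm_eq_abs, sq_abs]; rfl

lemma eucNorm_nonneg {n : ℕ} (v : Fin n → ℝ) : 0 ≤ eucNorm v := Real.sqrt_nonneg _

lemma eucNorm_line (n : ℕ) (x x₀ v : Fin n → ℝ) (t : ℝ) :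
    eucNorm (x + t • v - x₀) ≤ eucNorm (x - x₀) + |t| * eucNorm v := by
  simp only [eucNorm_eq]
  have : (WithLp.equiv 2 (Fin n → ℝ)).symm (x + t • v - x₀)
      = (WithLp.equiv 2 (Fin n → ℝ)).symm (x - x₀) + t • (WithLp.equiv 2 (Fin n → ℝ)).symm v := by
    simp [WithLp.toLp_add, WithLp.toLp_sub, WithLp.toLp_smul]
    abel
  rw [this]
  refine (norm_add_le _ _).trans ?_
  rw [norm_smul, Real.norm_eq_abs]

lemma periodic_single_int {n : ℕ} {f : (Fin n → ℝ) → ℝ} (hf : PeriodicPi f) (i : Fin n)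
    (m : ℤ) : ∀ x, f (x + Pi.single i (m : ℝ)) = f x := by
  induction m using Int.induction_on with
  | zero => intro x; simp
  | succ k ih =>
      intro x
      have h : (x : Fin n → ℝ) + Pi.single i ((k + 1 : ℤ) : ℝ)
          = (x + Pi.single i (k : ℝ)) + Pi.single i 1 := by
        push_cast
        rw [add_assoc, ← Pi.single_add]
      rw [h, hf _ i]; exact ih x
  | pred k ih =>
      intro x
      have h : (x : Fin n → ℝ) + Pi.single i ((-(k:ℤ) - 1 : ℤ) : ℝ) + Pi.single i 1
          = x + Pi.single i ((-(k:ℤ) : ℤ) : ℝ) := by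
        push_cast
        rw [add_assoc, ← Pi.single_add]
        norm_num
      have := hf (x + Pi.single i ((-(k:ℤ) - 1 : ℤ) : ℝ)) i
      rw [h] at this
      rw [← this]; exact ih x

lemma periodic_shift {n : ℕ} {f : (Fin n → ℝ) → ℝ} (hf : PeriodicPi f)
    (x : Fin n → ℝ) (k : Fin n → ℤ) : f (x + fun i => (k i : ℝ)) = f x := by
  have key : ∀ s : Finset (Fin n), ∀ x, f (x + ∑ i ∈ s, Pi.single i ((k i : ℝ))) = f x := by
    intro s
    induction s using Finset.induction_on with
    | empty => intro x; simp
    | insert _ _ hnotmem ih =>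
        intro x
        rename_i a s'
        rw [Finset.sum_insert hnotmem, ← add_assoc]
        exact (ih (x + Pi.single a ((k a : ℝ)))).trans (periodic_single_int hf a (k a) x)
  have : (fun i => (k i : ℝ)) = ∑ i, Pi.single i ((k i : ℝ)) := by
    rw [Finset.univ_sum_single]
  rw [this]
  exact key Finset.univ x

lemma le_sSup_Kcube {F : (Fin 5 → ℝ) → ℝ} (hF : Continuous F) (hFper : PeriodicPi F)
    (x : Fin 5 → ℝ) : F x ≤ sSup (F '' Kcube) := by
  set y : Fin 5 → ℝ := fun i => x i - round (x i) with hy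
  have hmem : y ∈ Kcube := by
    constructor <;> intro i <;>
      [ {have := abs_sub_round (x i); rw [abs_le] at this; simp [hy]; linarith [this.1]} ;
        {have := abs_sub_round (x i); rw [abs_le] at this; simp [hy]; linarith [this.2]} ]
  have hxy : F x = F y := by
    have : x = y + fun i => ((round (x i) : ℤ) : ℝ) := by
      funext i; simp [hy]
    rw [this, periodic_shift hFper]
  have hcomp : IsCompact Kcube := isCompact_Icc
  have hbdd : BddAbove (F '' Kcube) := (hcomp.image hF).bddAbove
  rw [hxy]
  exact le_csSup hbdd ⟨y, hmem, rfl⟩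

section Deriv
variable {n : ℕ}

noncomputable def qform (x₀ : Fin n → ℝ) : (Fin n → ℝ) → ℝ := fun x => ∑ i, (x i - x₀ i) ^ 2

lemma qform_hasFDerivAt (x₀ x : Fin n → ℝ) :
    HasFDerivAt (qform x₀)
      (∑ i, (2 * (x i - x₀ i)) • (ContinuousLinearMap.proj i :
        (Fin n → ℝ) →L[ℝ] ℝ)) x := by
  have h : ∀ i : Fin n, HasFDerivAt (fun y : Fin n → ℝ => (y i - x₀ i) ^ 2)
      ((2 * (x i - x₀ i)) • (ContinuousLinearMap.proj i : (Fin n → ℝ) →L[ℝ] ℝ)) x := by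
    intro i
    have h1 : HasFDerivAt (fun y : Fin n → ℝ => y i - x₀ i)
        (ContinuousLinearMap.proj i : (Fin n → ℝ) →L[ℝ] ℝ) x :=
      HasFDerivAt.sub_const (f := fun y : Fin n → ℝ => y i) (x₀ i)
        ((ContinuousLinearMap.proj i : (Fin n → ℝ) →L[ℝ] ℝ).hasFDerivAt)
    have h2 := h1.mul h1
    have he : (fun y : Fin n → ℝ => (y i - x₀ i) ^ 2)
        = fun y : Fin n → ℝ => (y i - x₀ i) * (y i - x₀ i) := by
      funext y; ring
    rw [he]
    have h2s : (2 * (x i - x₀ i)) • (ContinuousLinearMap.proj i : (Fin n → ℝ) →L[ℝ] ℝ)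
        = (x i - x₀ i) • ContinuousLinearMap.proj i + (x i - x₀ i) • ContinuousLinearMap.proj i := by
      rw [two_mul, add_smul]
    rw [h2s]; exact h2
  exact HasFDerivAt.fun_sum (u := Finset.univ) (fun i _ => h i)

lemma qform_contDiff (x₀ : Fin n → ℝ) : ContDiff ℝ 2 (qform x₀) := by
  apply ContDiff.sum
  intro i _
  exact (((ContinuousLinearMap.proj i :
    (Fin n → ℝ) →L[ℝ] ℝ).contDiff).sub contDiff_const).pow 2

end Deriv

lemma uAux_contDiff {φ : (Fin 5 → ℝ) → ℝ} (hφ : ContDiff ℝ 2 φ) (x₀ : Fin 5 → ℝ) :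
    ContDiff ℝ 2 (uAux φ x₀) := by
  have : uAux φ x₀ = fun x => φ x - sSup (φ '' Kcube) + 4 * (1/48) * qform x₀ x := rfl
  rw [this]
  exact (hφ.sub contDiff_const).add (contDiff_const.mul (qform_contDiff x₀))

lemma pd_uAux {φ : (Fin 5 → ℝ) → ℝ} (hφ : ContDiff ℝ 2 φ) (x₀ : Fin 5 → ℝ)
    (x : Fin 5 → ℝ) (j : Fin 5) :
    pd j (uAux φ x₀) x = pd j φ x + (1/6) * (x j - x₀ j) := by
  have h1 : HasFDerivAt (uAux φ x₀)
      (fderiv ℝ φ x + (4 * (1/48:ℝ)) • (∑ i, (2 * (x i - x₀ i)) •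
        (ContinuousLinearMap.proj i : (Fin 5 → ℝ) →L[ℝ] ℝ))) x := by
    have hφd : HasFDerivAt φ (fderiv ℝ φ x) x :=
      (hφ.differentiable (by norm_num)).differentiableAt.hasFDerivAt
    exact (hφd.sub_const _).add ((qform_hasFDerivAt x₀ x).const_mul _)
  rw [pd, h1.fderiv]
  have : (∑ i, (2 * (x i - x₀ i)) • (ContinuousLinearMap.proj i :
      (Fin 5 → ℝ) →L[ℝ] ℝ)) (Pi.single j 1) = 2 * (x j - x₀ j) := by
    simp [ContinuousLinearMap.sum_apply, Pi.single_apply]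
  simp only [ContinuousLinearMap.add_apply, ContinuousLinearMap.smul_apply, this,
    smul_eq_mul]
  rw [pd]; ring

lemma fderiv_contDiff_one {f : (Fin 5 → ℝ) → ℝ} (hf : ContDiff ℝ 2 f) :
    ContDiff ℝ 1 (fderiv ℝ f) := by
  exact (hf.fderiv_right (by norm_num))

lemma pd_differentiable {f : (Fin 5 → ℝ) → ℝ} (hf : ContDiff ℝ 2 f) (j : Fin 5) :
    Differentiable ℝ (pd j f) := by
  have : pd j f = fun y => (ContinuousLinearMap.apply ℝ ℝ (Pi.single j 1 : Fin 5 → ℝ))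
      (fderiv ℝ f y) := rfl
  rw [this]
  exact (ContinuousLinearMap.apply ℝ ℝ _).differentiable.comp
    ((fderiv_contDiff_one hf).differentiable (by norm_num))

lemma pd2_eq_fderiv2 {f : (Fin 5 → ℝ) → ℝ} (hf : ContDiff ℝ 2 f) (x : Fin 5 → ℝ)
    (i j : Fin 5) :
    pd2 i j f x = fderiv ℝ (fderiv ℝ f) x (Pi.single i 1) (Pi.single j 1) := by
  have hd : DifferentiableAt ℝ (fderiv ℝ f) x :=
    ((fderiv_contDiff_one hf).differentiable (by norm_num)) x
  have hc : HasFDerivAt (⇑(ContinuousLinearMap.apply ℝ ℝ (Pi.single j 1 : Fin 5 → ℝ)) ∘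
        (fderiv ℝ f))
      ((ContinuousLinearMap.apply ℝ ℝ (Pi.single j 1 : Fin 5 → ℝ)).comp
        (fderiv ℝ (fderiv ℝ f) x)) x :=
    (ContinuousLinearMap.apply ℝ ℝ _).hasFDerivAt.comp x hd.hasFDerivAt
  have hpd : pd j f = ⇑(ContinuousLinearMap.apply ℝ ℝ (Pi.single j 1 : Fin 5 → ℝ)) ∘
      (fderiv ℝ f) := rfl
  simp only [pd2, pd, hpd, hc.fderiv]
  rfl

lemma pd2_uAux {φ : (Fin 5 → ℝ) → ℝ} (hφ : ContDiff ℝ 2 φ) (x₀ : Fin 5 → ℝ)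
    (x : Fin 5 → ℝ) (i j : Fin 5) :
    pd2 i j (uAux φ x₀) x = pd2 i j φ x + if i = j then (1/6 : ℝ) else 0 := by
  have hfun : pd j (uAux φ x₀) = fun y => pd j φ y + ((1/6 : ℝ) * y j - (1/6) * x₀ j) := by
    funext y; rw [pd_uAux hφ x₀ y j]; ring
  have hlin : HasFDerivAt (fun y : Fin 5 → ℝ => (1/6 : ℝ) * y j - (1/6) * x₀ j)
      ((1/6 : ℝ) • (ContinuousLinearMap.proj j : (Fin 5 → ℝ) →L[ℝ] ℝ)) x := by
    have : HasFDerivAt (fun y : Fin 5 → ℝ => y j)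
        (ContinuousLinearMap.proj j : (Fin 5 → ℝ) →L[ℝ] ℝ) x :=
      (ContinuousLinearMap.proj j : (Fin 5 → ℝ) →L[ℝ] ℝ).hasFDerivAt
    simpa using (this.const_mul (1/6 : ℝ)).sub_const ((1/6 : ℝ) * x₀ j)
  have hd : DifferentiableAt ℝ (pd j φ) x := pd_differentiable hφ j x
  rw [pd2, pd, hfun]
  rw [fderiv_fun_add hd (hlin.differentiableAt)]
  rw [hlin.fderiv]
  simp only [ContinuousLinearMap.add_apply, ContinuousLinearMap.smul_apply,
    ContinuousLinearMap.proj_apply, smul_eq_mul, Pi.single_apply]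
  rw [pd2, pd]
  by_cases h : i = j <;> simp [h, Ne.symm]

lemma hessian_nonneg {u : (Fin 5 → ℝ) → ℝ} (hu : ContDiff ℝ 2 u) (x₀ x : Fin 5 → ℝ)
    (hx : eucNorm (x - x₀) < 1/2)
    (hsupp : ∀ y : Fin 5 → ℝ, eucNorm (y - x₀) < 1/2 →
      u x + (fderiv ℝ u x) (y - x) ≤ u y)
    (v : Fin 5 → ℝ) : 0 ≤ fderiv ℝ (fderiv ℝ u) x v v := by
  by_contra hneg
  push_neg at hneg
  set Q := fderiv ℝ (fderiv ℝ u) x v v with hQdef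
  have hud : Differentiable ℝ u := hu.differentiable (by norm_num)
  have hud2 : Differentiable ℝ (fderiv ℝ u) :=
    (hu.fderiv_right (m := 1) (by norm_num)).differentiable (by norm_num)
  set c : ℝ → (Fin 5 → ℝ) := fun t => x + t • v with hcdef
  have hc : ∀ t, HasDerivAt c v t := by
    intro t
    have : HasDerivAt (fun t : ℝ => t • v) ((1:ℝ) • v) t := (hasDerivAt_id t).smul_const v
    simpa only [one_smul] using this.const_add x
  have hc0 : c 0 = x := by simp [hcdef]
  set k : ℝ := fderiv ℝ u x v with hkdef
  set h : ℝ → ℝ := fun t => u (c t) - u x - t * k with hhdef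
  set h' : ℝ → ℝ := fun t => fderiv ℝ u (c t) v - k with hh'def
  have hh' : ∀ t, HasDerivAt h (h' t) t := by
    intro t
    have h1 : HasDerivAt (fun t => u (c t)) (fderiv ℝ u (c t) v) t :=
      (hud (c t)).hasFDerivAt.comp_hasDerivAt t (hc t)
    exact (h1.sub_const (u x)).sub (hasDerivAt_mul_const k)
  have hh'0 : h' 0 = 0 := by simp [hh'def, hc0, hkdef]
  have hQderiv : HasDerivAt h' Q 0 := by
    have hL : HasFDerivAt (⇑(ContinuousLinearMap.apply ℝ ℝ v) ∘ (fderiv ℝ u))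
        ((ContinuousLinearMap.apply ℝ ℝ v).comp (fderiv ℝ (fderiv ℝ u) x)) (c 0) := by
      rw [hc0]
      exact (ContinuousLinearMap.apply ℝ ℝ v).hasFDerivAt.comp x (hud2 x).hasFDerivAt
    have := hL.comp_hasDerivAt 0 (hc 0)
    have h2 : HasDerivAt (fun t => fderiv ℝ u (c t) v) Q 0 := by
      exact this
    simpa [hh'def] using h2.sub_const k
  set δ : ℝ := (1/2 - eucNorm (x - x₀)) / (eucNorm v + 1) with hδdef
  have hδpos : 0 < δ := by
    apply div_pos (by linarith) (by linarith [eucNorm_nonneg v])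
  have hnonneg : ∀ t : ℝ, |t| < δ → 0 ≤ h t := by
    intro t ht
    have hmem : eucNorm (c t - x₀) < 1/2 := by
      have h1 := eucNorm_line 5 x x₀ v t
      have h2 : |t| * eucNorm v ≤ |t| * (eucNorm v + 1) := by
        have := abs_nonneg t; nlinarith [eucNorm_nonneg v]
      have h3 : |t| * (eucNorm v + 1) < δ * (eucNorm v + 1) := by
        have : (0:ℝ) < eucNorm v + 1 := by linarith [eucNorm_nonneg v]
        exact mul_lt_mul_of_pos_right ht this
      have h4 : δ * (eucNorm v + 1) = 1/2 - eucNorm (x - x₀) := by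
        rw [hδdef, div_mul_cancel₀]
        exact ne_of_gt (by linarith [eucNorm_nonneg v])
      calc eucNorm (c t - x₀) ≤ eucNorm (x - x₀) + |t| * eucNorm v := h1
        _ < 1/2 := by linarith
    have := hsupp (c t) hmem
    have hlin : (fderiv ℝ u x) (c t - x) = t * k := by
      have : c t - x = t • v := by simp [hcdef]
      rw [this, _root_.map_smul, smul_eq_mul, hkdef]
    rw [hlin] at this
    simp only [hhdef]
    linarith
  have hslope := hasDerivAt_iff_tendsto_slope.mp hQderiv
  have hev : ∀ᶠ t in nhdsWithin 0 {(0:ℝ)}ᶜ, slope h' 0 t < 0 :=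
    hslope.eventually_lt_const hneg
  rw [eventually_nhdsWithin_iff] at hev
  rw [Metric.eventually_nhds_iff] at hev
  obtain ⟨ε, hεpos, hball⟩ := hev
  set r : ℝ := min (ε/2) (δ/2) with hrdef
  have hrpos : 0 < r := by positivity
  have hrδ : r < δ := by
    have : r ≤ δ/2 := min_le_right _ _
    linarith
  have hderiv_neg : ∀ t ∈ Set.Ioo (0:ℝ) r, deriv h t < 0 := by
    intro t ht
    have htpos : 0 < t := ht.1
    have htr : t < r := ht.2
    have hdist : dist t 0 < ε := by
      rw [Real.dist_eq, sub_zero, abs_of_pos htpos]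
      have : r ≤ ε/2 := min_le_left _ _
      linarith
    have hne : t ∈ ({(0:ℝ)}ᶜ : Set ℝ) := by simp; linarith
    have hs := hball hdist hne
    rw [slope_def_field] at hs
    have : h' t < 0 := by
      have hdiv : (h' t - h' 0) / (t - 0) < 0 := by
        simpa [div_eq_inv_mul] using hs
      rw [hh'0, sub_zero, sub_zero] at hdiv
      have := mul_neg_of_neg_of_pos hdiv htpos
      rwa [div_mul_cancel₀ _ (ne_of_gt htpos)] at this
    rwa [(hh' t).deriv]
  have hcont : ContinuousOn h (Set.Icc 0 r) :=
    (fun t _ => ((hh' t).differentiableAt.continuousAt.continuousWithinAt))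
  have hanti : StrictAntiOn h (Set.Icc 0 r) := by
    apply strictAntiOn_of_deriv_neg (convex_Icc 0 r) hcont
    intro t ht
    rw [interior_Icc] at ht
    exact hderiv_neg t ht
  have h0 : h 0 = 0 := by simp [hhdef, hc0]
  have hlt : h r < 0 := by
    have := hanti (Set.left_mem_Icc.mpr hrpos.le) (Set.right_mem_Icc.mpr hrpos.le) hrpos
    rwa [h0] at this
  have hge : 0 ≤ h r := hnonneg r (by rw [abs_of_pos hrpos]; exact hrδ)
  linarith

lemma trace_eq_sum_eigs {n : ℕ} (A : Matrix (Fin n) (Fin n) ℝ) (hA : A.IsHermitian) :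
    A.trace = ∑ i, hA.eigenvalues i := by
  conv_lhs => rw [hA.spectral_theorem]
  rw [Unitary.conjStarAlgAut_apply, Matrix.trace_mul_cycle]
  simp

lemma det_le_trace_pow {n : ℕ} (hn : n ≠ 0) (A : Matrix (Fin n) (Fin n) ℝ)
    (hA : A.PosSemidef) : A.det ≤ (A.trace / n) ^ n := by
  set lam := hA.1.eigenvalues with hlam
  have hz : ∀ i, 0 ≤ lam i := fun i => hA.eigenvalues_nonneg i
  have hdet : A.det = ∏ i, lam i := by
    have := hA.1.det_eq_prod_eigenvalues
    simpa using this
  have htr : A.trace = ∑ i, lam i := trace_eq_sum_eigs A hA.1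
  have hcard : (Finset.univ : Finset (Fin n)).card = n := by simp
  have key := Real.geom_mean_le_arith_mean_weighted (Finset.univ : Finset (Fin n))
    (fun _ => (n:ℝ)⁻¹) lam (fun i _ => by positivity)
    (by simp [hcard]; field_simp) (fun i _ => hz i)
  have hprod : ∏ i, lam i ^ ((n:ℝ)⁻¹) = (∏ i, lam i) ^ ((n:ℝ)⁻¹) :=
    Real.finset_prod_rpow Finset.univ lam (fun i _ => hz i) _
  rw [hprod] at key
  have hsum : ∑ i, (n:ℝ)⁻¹ * lam i = A.trace / n := by
    rw [← Finset.mul_sum, htr]; ring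
  rw [hsum] at key
  have hProdnn : 0 ≤ ∏ i, lam i := Finset.prod_nonneg (fun i _ => hz i)
  have := pow_le_pow_left₀ (Real.rpow_nonneg hProdnn _) key n
  rw [Real.rpow_inv_natCast_pow hProdnn hn] at this
  rw [hdet]
  exact this

lemma arith_bound (a00 a11 a22 a33 a44 a04 a14 a24 a34 E M : ℝ)
    (heqx : (a00 - 1/6 + (a11 - 1/6) + (a22 - 1/6) + (a33 - 1/6) + 1) * (a44 - 1/6 + 1)
      - a04^2 - a14^2 - a24^2 - a34^2 = E)
    (h0 : 0 ≤ a00) (h1 : 0 ≤ a11) (h2 : 0 ≤ a22) (h3 : 0 ≤ a33) (h4 : 0 ≤ a44)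
    (c0 : a04^2 ≤ a00*a44) (c1 : a14^2 ≤ a11*a44) (c2 : a24^2 ≤ a22*a44)
    (c3 : a34^2 ≤ a33*a44) (hE : E ≤ M) :
    (1/5)*(a00+a11+a22+a33+a44) ≤ M := by
  nlinarith

/-- On `Γ_{ε₀}` the Laplacian and the Hessian determinant of `u` are controlled by
`max_K F`. -/
theorem lap_and_det_bound_on_Gamma
    (F φ : (Fin 5 → ℝ) → ℝ) (hF : Continuous F) (hFper : PeriodicPi F)
    (hφ : ContDiff ℝ 2 φ) (hφper : PeriodicPi φ) (heq : EqStar F φ)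
    (x₀ : Fin 5 → ℝ) (hx₀ : x₀ ∈ Kcube) (hmin : ∀ y ∈ Kcube, φ x₀ ≤ φ y) :
    ∀ x ∈ GammaSet φ x₀,
      (1/5) * lap (uAux φ x₀) x ≤ Real.exp (sSup (F '' Kcube)) ∧
      (Matrix.of fun i j => pd2 i j (uAux φ x₀) x).det ≤ Real.exp (5 * sSup (F '' Kcube)) := by
  intro x hx
  obtain ⟨hx1, hx2, _⟩ := hx
  set u := uAux φ x₀ with hu_def
  have hu : ContDiff ℝ 2 u := uAux_contDiff hφ x₀
  have hud : Differentiable ℝ u := hu.differentiable (by norm_num)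
  have hud2 : Differentiable ℝ (fderiv ℝ u) :=
    (hu.fderiv_right (m := 1) (by norm_num)).differentiable (by norm_num)
  set H := fderiv ℝ (fderiv ℝ u) x with hH_def
  set a : Fin 5 → Fin 5 → ℝ :=
    fun i j => H (Pi.single i 1) (Pi.single j 1) with ha_def
  -- supporting hyperplane in `fderiv` form
  have hsupp : ∀ y : Fin 5 → ℝ, eucNorm (y - x₀) < 1/2 →
      u x + (fderiv ℝ u x) (y - x) ≤ u y := by
    intro y hy
    have hle := hx2 y hy
    have hrw : (fderiv ℝ u x) (y - x) = ∑ i, pd i u x * (y i - x i) := by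
      rw [clm_apply_sum]
      refine Finset.sum_congr rfl fun i _ => ?_
      simp only [Pi.sub_apply, pd]
      ring
    rw [hrw]
    exact hle
  have hQ : ∀ v, 0 ≤ H v v := hessian_nonneg hu x₀ x hx1 hsupp
  have hsym : ∀ v w, H v w = H w v := fun v w =>
    second_derivative_symmetric (fun y => (hud y).hasFDerivAt) (hud2 x).hasFDerivAt v w
  have hA : ∀ i j, pd2 i j u x = a i j := fun i j => pd2_eq_fderiv2 hu x i j
  -- diagonal nonnegativity and 2×2 minors
  have hdiag : ∀ i, 0 ≤ a i i := fun i => hQ (Pi.single i 1)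
  have hcross : ∀ i : Fin 5, (a i 4) ^ 2 ≤ a i i * a 4 4 := by
    intro i
    have hquad : ∀ s : ℝ, 0 ≤ a i i * (s * s) + (2 * a i 4) * s + a 4 4 := by
      intro s
      have hq := hQ (s • (Pi.single i 1 : Fin 5 → ℝ) + Pi.single 4 1)
      have hexp : H (s • (Pi.single i 1 : Fin 5 → ℝ) + Pi.single 4 1)
          (s • (Pi.single i 1 : Fin 5 → ℝ) + Pi.single 4 1)
          = a i i * (s * s) + (2 * a i 4) * s + a 4 4 := by
        have e1 : H (s • (Pi.single i 1 : Fin 5 → ℝ) + Pi.single 4 1)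
            = s • H (Pi.single i 1) + H (Pi.single 4 1) := by
          rw [map_add, _root_.map_smul]
        rw [e1]
        have e2 : ∀ L : (Fin 5 → ℝ) →L[ℝ] ℝ,
            L (s • (Pi.single i 1 : Fin 5 → ℝ) + Pi.single 4 1)
            = s * L (Pi.single i 1) + L (Pi.single 4 1) := by
          intro L
          rw [map_add, _root_.map_smul, smul_eq_mul]
        simp only [ContinuousLinearMap.add_apply, ContinuousLinearMap.smul_apply,
          smul_eq_mul, e2]
        have h41 : H (Pi.single 4 1) (Pi.single i 1) = a i 4 := by
          rw [hsym]
        simp only [ha_def] at h41 ⊢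
        rw [h41]
        ring
      rw [hexp] at hq
      exact hq
    have hd := discrim_le_zero hquad
    rw [discrim] at hd
    nlinarith [hd]
  -- the equation at `x` in terms of `a`
  have hφa : ∀ i j, pd2 i j φ x = a i j - if i = j then (1/6:ℝ) else 0 := by
    intro i j
    have := pd2_uAux hφ x₀ x i j
    rw [← hu_def, hA i j] at this
    linarith
  have hdg : ∀ i : Fin 5, pd2 i i φ x = a i i - 1/6 := by
    intro i; rw [hφa i i]; simp
  have hod : ∀ i : Fin 5, i ≠ 4 → pd2 i 4 φ x = a i 4 := by
    intro i hi; rw [hφa i 4]; simp [hi]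
  have heqx := heq x
  rw [hdg 0, hdg 1, hdg 2, hdg 3, hdg 4, hod 0 (by decide), hod 1 (by decide),
    hod 2 (by decide), hod 3 (by decide)] at heqx
  -- bound on exp (F x)
  have hFle : Real.exp (F x) ≤ Real.exp (sSup (F '' Kcube)) :=
    Real.exp_le_exp.mpr (le_sSup_Kcube hF hFper x)
  set eM := Real.exp (sSup (F '' Kcube)) with heM_def
  have heMpos : 0 < eM := Real.exp_pos _
  -- the Laplacian
  have hlap : lap u x = a 0 0 + a 1 1 + a 2 2 + a 3 3 + a 4 4 := by
    rw [lap]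
    rw [Fin.sum_univ_five]
    rw [hA 0 0, hA 1 1, hA 2 2, hA 3 3, hA 4 4]
  have hgoal1 : (1/5) * lap u x ≤ eM := by
    rw [hlap]
    exact arith_bound _ _ _ _ _ _ _ _ _ _ _ heqx (hdiag 0) (hdiag 1) (hdiag 2)
      (hdiag 3) (hdiag 4) (hcross 0) (hcross 1) (hcross 2) (hcross 3) hFle
  refine ⟨hgoal1, ?_⟩
  -- the determinant bound
  set M : Matrix (Fin 5) (Fin 5) ℝ := Matrix.of fun i j => pd2 i j u x with hM_def
  have hMsd : M.PosSemidef := by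
    refine Matrix.PosSemidef.of_dotProduct_mulVec_nonneg ?_ ?_
    · show M.conjTranspose = M
      ext i j
      simp only [Matrix.conjTranspose_apply, hM_def, Matrix.of_apply, star_trivial]
      rw [hA, hA]
      exact hsym _ _
    · intro z
      have hz : star z = z := by
        funext i; exact star_trivial _
      rw [hz]
      have hdot : dotProduct z (M.mulVec z) = H z z := by
        have hHz : H z = ∑ i, z i • H (Pi.single i 1) := clm_apply_sum' H z
        have : H z z = ∑ i, z i * (H (Pi.single i 1) z) := by
          rw [hHz]
          rw [ContinuousLinearMap.sum_apply]
          refine Finset.sum_congr rfl fun i _ => ?_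
          simp [smul_eq_mul]
        rw [this]
        simp only [dotProduct, Matrix.mulVec, hM_def, Matrix.of_apply]
        refine Finset.sum_congr rfl fun i _ => ?_
        congr 1
        rw [clm_apply_sum _ (H (Pi.single i 1)) z]
        refine Finset.sum_congr rfl fun j _ => ?_
        rw [hA i j]
        simp only [ha_def]
        ring
      rw [hdot]
      exact hQ z
  have htrace : M.trace = lap u x := by
    simp only [Matrix.trace, Matrix.diag, hM_def, Matrix.of_apply, lap]
  have hdet := det_le_trace_pow (by norm_num) M hMsd
  have htr5 : M.trace / (5:ℕ) ≤ eM := by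
    rw [htrace]
    push_cast
    linarith [hgoal1]
  have htrnn : 0 ≤ M.trace / (5:ℕ) := by
    rw [htrace, hlap]
    have := hdiag 0; have := hdiag 1; have := hdiag 2; have := hdiag 3; have := hdiag 4
    positivity
  have hfinal : (M.trace / (5:ℕ)) ^ (5:ℕ) ≤ eM ^ (5:ℕ) :=
    pow_le_pow_left₀ htrnn htr5 5
  have hexp5 : eM ^ (5:ℕ) = Real.exp (5 * sSup (F '' Kcube)) := by
    rw [heM_def, ← Real.exp_nat_mul]
    norm_num
  calc M.det ≤ (M.trace / (5:ℕ)) ^ (5:ℕ) := hdet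
    _ ≤ eM ^ (5:ℕ) := hfinal
    _ = Real.exp (5 * sSup (F '' Kcube)) := hexp5
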